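/- Let X1 and X2 be real-valued random variables on a probability space with continuous cumulative distribution functions F1 and F2, let C(u1,u2) = P(F1(X1) ≤ u1, F2(X2) ≤ u2) be their copula, and define the Spearman rank correlation ρ^S(X1,X2) = 12 E[F1(X1) F2(X2)] − 3. If T1 : ℝ → ℝ is continuous and strictly increasing and T2 : ℝ → ℝ is continuous and strictly decreasing, then ρ^S(T1(X1), T2(X2)) = 3 − 12 ∫₀¹∫₀¹ C(u1, 1 − u2) du1 du2. -/

import Mathlib

open MeasureTheory ProbabilityTheory ENNReal Filter

lemma key_swap {Ω : Type*} [MeasureSpace Ω] [IsProbabilityMeasure (ℙ : Measure Ω)]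
    (g : Ω → ℝ) (hgm : Measurable g) (hg1 : ∀ w, g w ≤ 1)
    (f : Ω → ℝ≥0∞) (hf : Measurable f) :
    ∫⁻ u in Set.Ioc (0:ℝ) 1, ∫⁻ w : Ω, Set.indicator {w' : Ω | u ≤ g w'} f w
      = ∫⁻ w : Ω, ENNReal.ofReal (g w) * f w := by
  have hSmeas : MeasurableSet {p : ℝ × Ω | p.1 ≤ g p.2} :=
    measurableSet_le measurable_fst (hgm.comp measurable_snd)
  have huncurry : Function.uncurry (fun (u : ℝ) (w : Ω) => Set.indicator {w' : Ω | u ≤ g w'} f w)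
      = Set.indicator {p : ℝ × Ω | p.1 ≤ g p.2} (fun p => f p.2) := by
    ext p
    simp [Function.uncurry, Set.indicator_apply]
  rw [MeasureTheory.lintegral_lintegral_swap]
  · refine lintegral_congr fun w => ?_
    have h1 : (fun u : ℝ => Set.indicator {w' : Ω | u ≤ g w'} f w)
        = (Set.Iic (g w)).indicator (fun _ => f w) := by
      ext u
      simp [Set.indicator_apply]
    rw [h1, lintegral_indicator measurableSet_Iic, Measure.restrict_restrict measurableSet_Iic,
      setLIntegral_const]
    have hset : Set.Iic (g w) ∩ Set.Ioc (0:ℝ) 1 = Set.Ioc 0 (g w) := by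
      ext u
      simp only [Set.mem_inter_iff, Set.mem_Iic, Set.mem_Ioc]
      exact ⟨fun ⟨h1, h2, h3⟩ => ⟨h2, h1⟩, fun ⟨h1, h2⟩ => ⟨h2, h1, h2.trans (hg1 w)⟩⟩
    rw [hset, Real.volume_Ioc, mul_comm]
    norm_num
  · rw [huncurry]
    exact ((hf.comp measurable_snd).indicator hSmeas).aemeasurable

lemma key_swap' {Ω : Type*} [MeasureSpace Ω] [IsProbabilityMeasure (ℙ : Measure Ω)]
    (g : Ω → ℝ) (hgm : Measurable g) (hg0 : ∀ w, 0 ≤ g w)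
    (f : Ω → ℝ≥0∞) (hf : Measurable f) :
    ∫⁻ u in Set.Ioc (0:ℝ) 1, ∫⁻ w : Ω, Set.indicator {w' : Ω | g w' ≤ u} f w
      = ∫⁻ w : Ω, ENNReal.ofReal (1 - g w) * f w := by
  have hSmeas : MeasurableSet {p : ℝ × Ω | g p.2 ≤ p.1} :=
    measurableSet_le (hgm.comp measurable_snd) measurable_fst
  have huncurry : Function.uncurry (fun (u : ℝ) (w : Ω) => Set.indicator {w' : Ω | g w' ≤ u} f w)
      = Set.indicator {p : ℝ × Ω | g p.2 ≤ p.1} (fun p => f p.2) := by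
    ext p
    simp [Function.uncurry, Set.indicator_apply]
  rw [MeasureTheory.lintegral_lintegral_swap]
  · refine lintegral_congr fun w => ?_
    have h1 : (fun u : ℝ => Set.indicator {w' : Ω | g w' ≤ u} f w)
        = (Set.Ici (g w)).indicator (fun _ => f w) := by
      ext u
      simp [Set.indicator_apply]
    rw [h1, lintegral_indicator measurableSet_Ici, Measure.restrict_restrict measurableSet_Ici,
      setLIntegral_const]
    have hvol : volume (Set.Ici (g w) ∩ Set.Ioc (0:ℝ) 1) = ENNReal.ofReal (1 - g w) := by
      rcases eq_or_lt_of_le (hg0 w) with h0 | h0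
      · have : Set.Ici (g w) ∩ Set.Ioc (0:ℝ) 1 = Set.Ioc (0:ℝ) 1 := by
          rw [← h0]
          exact Set.inter_eq_self_of_subset_right (fun u hu => le_of_lt hu.1)
        rw [this, Real.volume_Ioc, ← h0]
      · have : Set.Ici (g w) ∩ Set.Ioc (0:ℝ) 1 = Set.Icc (g w) 1 := by
          ext u
          simp only [Set.mem_inter_iff, Set.mem_Ici, Set.mem_Ioc, Set.mem_Icc]
          exact ⟨fun ⟨h1, _, h3⟩ => ⟨h1, h3⟩, fun ⟨h1, h2⟩ => ⟨h1, lt_of_lt_of_le h0 h1, h2⟩⟩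
        rw [this, Real.volume_Icc]
    rw [hvol, mul_comm]
  · rw [huncurry]
    exact ((hf.comp measurable_snd).indicator hSmeas).aemeasurable

lemma meas_lt_eq {Ω : Type*} [MeasureSpace Ω] [IsProbabilityMeasure (ℙ : Measure Ω)]
    (X : Ω → ℝ) (F : ℝ → ℝ)
    (hF : ∀ t, F t = (ℙ {w | X w ≤ t}).toReal) (hFc : Continuous F) (x : ℝ) :
    ℙ {w | X w < x} = ℙ {w | X w ≤ x} := by
  set s : ℕ → Set Ω := fun n => {w | X w ≤ x - 1 / (n + 1)} with hs
  have hmono : Monotone s := by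
    intro n m hnm w hw
    have h1 : (1 : ℝ) / (m + 1) ≤ 1 / (n + 1) := by
      apply one_div_le_one_div_of_le
      · positivity
      · push_cast; have := (Nat.cast_le (α := ℝ)).mpr hnm; linarith
    simp only [hs, Set.mem_setOf_eq] at hw ⊢
    linarith
  have hUnion : (⋃ n, s n) = {w | X w < x} := by
    ext w
    simp only [hs, Set.mem_iUnion, Set.mem_setOf_eq]
    constructor
    · rintro ⟨n, hn⟩
      have : (0:ℝ) < 1 / (n + 1) := by positivity
      linarith
    · intro hw
      obtain ⟨n, hn⟩ := exists_nat_one_div_lt (by linarith : (0:ℝ) < x - X w)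
      exact ⟨n, by linarith⟩
  have htend : Tendsto (fun n => ℙ (s n)) atTop (nhds (ℙ {w | X w < x})) := by
    have := tendsto_measure_iUnion_atTop (μ := (ℙ : Measure Ω)) hmono
    rwa [hUnion] at this
  have htendR : Tendsto (fun n : ℕ => F (x - 1 / (n + 1))) atTop
      (nhds ((ℙ {w | X w < x}).toReal)) := by
    have h := (ENNReal.tendsto_toReal (measure_ne_top (ℙ : Measure Ω) _)).comp htend
    convert h using 2 with n
    exact hF _
  have htendR2 : Tendsto (fun n : ℕ => F (x - 1 / (n + 1))) atTop (nhds (F x)) := by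
    apply (hFc.continuousAt.tendsto).comp
    have : Tendsto (fun n : ℕ => 1 / ((n:ℝ) + 1)) atTop (nhds 0) :=
      tendsto_one_div_add_atTop_nhds_zero_nat
    have := (tendsto_const_nhds (x := x) (f := atTop)).sub this
    simpa using this
  have heq : (ℙ {w | X w < x}).toReal = (ℙ {w | X w ≤ x}).toReal := by
    rw [← hF x]; exact tendsto_nhds_unique htendR htendR2
  exact (ENNReal.toReal_eq_toReal_iff' (measure_ne_top _ _) (measure_ne_top _ _)).mp heq

lemma cdf_integral_half {Ω : Type*} [MeasureSpace Ω] [IsProbabilityMeasure (ℙ : Measure Ω)]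
    (X : Ω → ℝ) (hX : Measurable X) (F : ℝ → ℝ)
    (hF : ∀ t, F t = (ℙ {w | X w ≤ t}).toReal) (hFc : Continuous F) :
    ∫ w : Ω, F (X w) = 1 / 2 := by
  set μ := Measure.map X ℙ with hμ
  have : IsProbabilityMeasure μ := Measure.isProbabilityMeasure_map hX.aemeasurable
  have hμIic : ∀ x, μ (Set.Iic x) = ℙ {w | X w ≤ x} := fun x => by
    rw [hμ, Measure.map_apply hX measurableSet_Iic]; rfl
  have hatom : ∀ x, μ {x} = 0 := by
    intro x
    have hmap : μ {x} = ℙ {w | X w = x} := by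
      rw [hμ, Measure.map_apply hX (measurableSet_singleton x)]; rfl
    have hsplit : {w | X w ≤ x} = {w | X w < x} ∪ {w | X w = x} := by
      ext w; simp [le_iff_lt_or_eq]
    have hdisj : Disjoint {w | X w < x} {w | X w = x} := by
      rw [Set.disjoint_left]; intro w h1 h2
      simp only [Set.mem_setOf_eq] at h1 h2; exact absurd h2 (ne_of_lt h1)
    have hmeq : MeasurableSet {w | X w = x} := hX (measurableSet_singleton x)
    have := measure_union (μ := (ℙ : Measure Ω)) hdisj hmeq
    rw [← hsplit, ← meas_lt_eq X F hF hFc x] at this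
    rw [hmap]
    have h0 : ℙ {w | X w < x} + 0 = ℙ {w | X w < x} + ℙ {w | X w = x} := by
      rw [add_zero]; exact this
    exact ((ENNReal.add_right_inj (measure_ne_top _ _)).mp h0).symm
  set P := μ.prod μ with hP
  have hSm : MeasurableSet {p : ℝ × ℝ | p.2 ≤ p.1} :=
    measurableSet_le measurable_snd measurable_fst
  have hTm : MeasurableSet {p : ℝ × ℝ | p.1 ≤ p.2} :=
    measurableSet_le measurable_fst measurable_snd
  have hPS : P {p : ℝ × ℝ | p.2 ≤ p.1} = ∫⁻ x, μ (Set.Iic x) ∂μ := by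
    rw [hP, Measure.prod_apply hSm]
    exact lintegral_congr fun x => rfl
  have hPT : P {p : ℝ × ℝ | p.1 ≤ p.2} = P {p : ℝ × ℝ | p.2 ≤ p.1} := by
    have h1 : Measure.map Prod.swap P = P := by rw [hP, Measure.prod_swap]
    calc P {p : ℝ × ℝ | p.1 ≤ p.2}
        = (Measure.map Prod.swap P) {p : ℝ × ℝ | p.1 ≤ p.2} := by rw [h1]
      _ = P (Prod.swap ⁻¹' {p : ℝ × ℝ | p.1 ≤ p.2}) := Measure.map_apply measurable_swap hTm
      _ = P {p : ℝ × ℝ | p.2 ≤ p.1} := rfl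
  have hdiagm : MeasurableSet {p : ℝ × ℝ | p.1 = p.2} :=
    measurableSet_eq_fun measurable_fst measurable_snd
  have hdiag : P {p : ℝ × ℝ | p.1 = p.2} = 0 := by
    rw [hP, Measure.prod_apply hdiagm]
    have : ∀ x : ℝ, μ (Prod.mk x ⁻¹' {p : ℝ × ℝ | p.1 = p.2}) = 0 := by
      intro x
      have : (Prod.mk x ⁻¹' {p : ℝ × ℝ | p.1 = p.2}) = {x} := by
        ext y; simp [eq_comm]
      rw [this]; exact hatom x
    rw [lintegral_congr this, lintegral_zero]
  have hmain : P {p : ℝ × ℝ | p.2 ≤ p.1} + P {p : ℝ × ℝ | p.2 ≤ p.1} = 1 := by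
    have h := measure_union_add_inter (μ := P) {p : ℝ × ℝ | p.2 ≤ p.1} hTm
    have hu : {p : ℝ × ℝ | p.2 ≤ p.1} ∪ {p : ℝ × ℝ | p.1 ≤ p.2} = Set.univ := by
      ext p; simpa using le_total p.2 p.1
    have hi : {p : ℝ × ℝ | p.2 ≤ p.1} ∩ {p : ℝ × ℝ | p.1 ≤ p.2} = {p : ℝ × ℝ | p.1 = p.2} := by
      ext p
      simp only [Set.mem_inter_iff, Set.mem_setOf_eq]
      exact ⟨fun ⟨a, b⟩ => le_antisymm b a, fun h => ⟨le_of_eq h.symm, le_of_eq h⟩⟩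
    rw [hu, hi, hdiag, hPT, measure_univ, add_zero] at h
    exact h.symm
  have hhalf : (P {p : ℝ × ℝ | p.2 ≤ p.1}).toReal = 1 / 2 := by
    have hne : P {p : ℝ × ℝ | p.2 ≤ p.1} ≠ ⊤ := measure_ne_top _ _
    have := congrArg ENNReal.toReal hmain
    rw [ENNReal.toReal_add hne hne, ENNReal.toReal_one] at this
    linarith
  have hint : ∫ w : Ω, F (X w) = ∫ x, F x ∂μ :=
    (integral_map hX.aemeasurable hFc.aestronglyMeasurable).symm
  rw [hint, integral_eq_lintegral_of_nonneg_ae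
      (Filter.Eventually.of_forall (fun x => by rw [hF]; exact ENNReal.toReal_nonneg))
      hFc.aestronglyMeasurable]
  have : ∀ x, ENNReal.ofReal (F x) = μ (Set.Iic x) := fun x => by
    rw [hF, ← hμIic, ENNReal.ofReal_toReal (measure_ne_top _ _)]
  rw [lintegral_congr this, ← hPS, hhalf]

/-- **Spearman's rho under an increasing and a decreasing transformation.**
With copula `C(u1,u2) = P(F1(X1) ≤ u1, F2(X2) ≤ u2)` and
`ρ^S(X1,X2) = 12 E[F1(X1) F2(X2)] − 3`, if `T1` is continuous strictly increasing and `T2`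
is continuous strictly decreasing, then
`ρ^S(T1(X1), T2(X2)) = 3 − 12 ∫₀¹∫₀¹ C(u1, 1 − u2) du1 du2`. -/
theorem spearman_of_strictMono_strictAnti
    {Ω : Type*} [MeasureSpace Ω] [IsProbabilityMeasure (ℙ : Measure Ω)]
    (X1 X2 : Ω → ℝ) (hX1 : Measurable X1) (hX2 : Measurable X2)
    (F1 F2 : ℝ → ℝ)
    (hF1 : ∀ t, F1 t = (ℙ {ω | X1 ω ≤ t}).toReal)
    (hF2 : ∀ t, F2 t = (ℙ {ω | X2 ω ≤ t}).toReal)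
    (hF1c : Continuous F1) (hF2c : Continuous F2)
    (C : ℝ → ℝ → ℝ)
    (hC : ∀ u1 u2, C u1 u2 = (ℙ {ω | F1 (X1 ω) ≤ u1 ∧ F2 (X2 ω) ≤ u2}).toReal)
    (T1 T2 : ℝ → ℝ)
    (hT1c : Continuous T1) (hT2c : Continuous T2)
    (hT1 : StrictMono T1) (hT2 : StrictAnti T2)
    (G1 G2 : ℝ → ℝ)
    (hG1 : ∀ t, G1 t = (ℙ {ω | T1 (X1 ω) ≤ t}).toReal)
    (hG2 : ∀ t, G2 t = (ℙ {ω | T2 (X2 ω) ≤ t}).toReal) :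
    12 * (∫ ω, G1 (T1 (X1 ω)) * G2 (T2 (X2 ω))) - 3 =
      3 - 12 * (∫ u1 in (0:ℝ)..1, ∫ u2 in (0:ℝ)..1, C u1 (1 - u2)) := by
  set A : Ω → ℝ := fun w => F1 (X1 w) with hA
  set B : Ω → ℝ := fun w => F2 (X2 w) with hB
  have hAm : Measurable A := hF1c.measurable.comp hX1
  have hBm : Measurable B := hF2c.measurable.comp hX2
  have hle1 : ∀ s : Set Ω, ((ℙ : Measure Ω) s).toReal ≤ 1 := fun s => by
    simpa using ENNReal.toReal_mono (by simp) (prob_le_one (μ := (ℙ : Measure Ω)) (s := s))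
  have hA0 : ∀ w, 0 ≤ A w := fun w => by rw [hA]; simp only; rw [hF1]; exact ENNReal.toReal_nonneg
  have hA1 : ∀ w, A w ≤ 1 := fun w => by rw [hA]; simp only; rw [hF1]; exact hle1 _
  have hB0 : ∀ w, 0 ≤ B w := fun w => by rw [hB]; simp only; rw [hF2]; exact ENNReal.toReal_nonneg
  have hB1 : ∀ w, B w ≤ 1 := fun w => by rw [hB]; simp only; rw [hF2]; exact hle1 _
  -- pointwise identification of G1 ∘ T1 and G2 ∘ T2
  have hG1eq : ∀ x, G1 (T1 x) = F1 x := by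
    intro x
    rw [hG1, hF1]
    congr 2
    ext w
    exact hT1.le_iff_le
  have hG2eq : ∀ x, G2 (T2 x) = 1 - F2 x := by
    intro x
    rw [hG2]
    have h1 : {w | T2 (X2 w) ≤ T2 x} = {w | X2 w < x}ᶜ := by
      ext w
      simp only [Set.mem_setOf_eq, Set.mem_compl_iff, not_lt]
      exact hT2.le_iff_ge
    rw [h1, prob_compl_eq_one_sub (measurableSet_lt hX2 measurable_const),
      meas_lt_eq X2 F2 hF2 hF2c x,
      ENNReal.toReal_sub_of_le (prob_le_one) ENNReal.one_ne_top, ENNReal.toReal_one, ← hF2]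
  -- rewrite the LHS integral
  have hLHS : (∫ w : Ω, G1 (T1 (X1 w)) * G2 (T2 (X2 w))) = ∫ w : Ω, A w * (1 - B w) := by
    refine integral_congr_ae (Filter.Eventually.of_forall fun w => ?_)
    show G1 (T1 (X1 w)) * G2 (T2 (X2 w)) = A w * (1 - B w)
    rw [hG1eq, hG2eq, hA, hB]
  -- the double integral
  have hCset : ∀ u1 u2 : ℝ, {ω | F1 (X1 ω) ≤ u1 ∧ F2 (X2 ω) ≤ 1 - u2}
      = {w | A w ≤ u1} ∩ {w | u2 ≤ 1 - B w} := by
    intro u1 u2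
    ext w
    simp only [Set.mem_setOf_eq, Set.mem_inter_iff, hA, hB]
    constructor
    · rintro ⟨h1, h2⟩; exact ⟨h1, by linarith⟩
    · rintro ⟨h1, h2⟩; exact ⟨h1, by linarith⟩
  set K : ℝ → ℝ≥0∞ := fun u1 =>
    ∫⁻ w : Ω, Set.indicator {w' : Ω | A w' ≤ u1} (fun w => ENNReal.ofReal (1 - B w)) w with hK
  have hinner : ∀ u1 : ℝ, (∫ u2 in (0:ℝ)..1, C u1 (1 - u2)) = (K u1).toReal := by
    intro u1
    have hAset : MeasurableSet {w | A w ≤ u1} := hAm measurableSet_Iic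
    have hUm : MeasurableSet {p : ℝ × Ω | A p.2 ≤ u1 ∧ p.1 ≤ 1 - B p.2} := by
      refine MeasurableSet.inter ?_ ?_
      · exact measurable_snd (hAm measurableSet_Iic)
      · exact measurableSet_le measurable_fst ((measurable_const.sub hBm).comp measurable_snd)
    have hmeas : Measurable fun u2 : ℝ => ℙ ({w | A w ≤ u1} ∩ {w | u2 ≤ 1 - B w}) := by
      have h := measurable_measure_prodMk_left (ν := (ℙ : Measure Ω)) hUm
      convert h using 2 with u2
      rfl
    have hswap := key_swap (g := fun w => 1 - B w) (measurable_const.sub hBm)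
      (fun w => by simpa using hB0 w)
      (Set.indicator {w : Ω | A w ≤ u1} (fun _ => (1:ℝ≥0∞)))
      (measurable_const.indicator hAset)
    have hind : ∀ u2 : ℝ, (∫⁻ w : Ω, Set.indicator {w' : Ω | u2 ≤ 1 - B w'}
        (Set.indicator {w : Ω | A w ≤ u1} fun _ => (1:ℝ≥0∞)) w)
        = ℙ ({w | A w ≤ u1} ∩ {w | u2 ≤ 1 - B w}) := by
      intro u2
      rw [Set.indicator_indicator]
      rw [lintegral_indicator (s := {w' : Ω | u2 ≤ 1 - B w'} ∩ {w | A w ≤ u1}) ((measurableSet_le measurable_const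
        (measurable_const.sub hBm : Measurable fun w => 1 - B w)).inter hAset), setLIntegral_one, Set.inter_comm]
    calc (∫ u2 in (0:ℝ)..1, C u1 (1 - u2))
        = ∫ u2 in Set.Ioc (0:ℝ) 1, (ℙ ({w | A w ≤ u1} ∩ {w | u2 ≤ 1 - B w})).toReal := by
          rw [intervalIntegral.integral_of_le (by norm_num : (0:ℝ) ≤ 1)]
          refine setIntegral_congr_fun measurableSet_Ioc fun u2 _ => ?_
          rw [hC, hCset]
      _ = (∫⁻ u2 in Set.Ioc (0:ℝ) 1, ℙ ({w | A w ≤ u1} ∩ {w | u2 ≤ 1 - B w})).toReal := by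
          refine integral_toReal (hmeas.aemeasurable.restrict) ?_
          exact Filter.Eventually.of_forall fun u2 => measure_lt_top _ _
      _ = (K u1).toReal := by
          congr 1
          have h1 : (∫⁻ u2 in Set.Ioc (0:ℝ) 1, ℙ ({w | A w ≤ u1} ∩ {w | u2 ≤ 1 - B w}))
              = ∫⁻ u2 in Set.Ioc (0:ℝ) 1, ∫⁻ w : Ω, Set.indicator {w' : Ω | u2 ≤ 1 - B w'}
                (Set.indicator {w : Ω | A w ≤ u1} fun _ => (1:ℝ≥0∞)) w :=
            setLIntegral_congr_fun measurableSet_Ioc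
              (fun u2 _ => (hind u2).symm)
          rw [h1, hswap, hK]
          refine lintegral_congr fun w => ?_
          by_cases h : A w ≤ u1 <;> simp [Set.indicator_apply, h]
  -- outer integral
  have hKm : Measurable K := by
    have huc : Function.uncurry (fun (u1 : ℝ) (w : Ω) => Set.indicator {w' : Ω | A w' ≤ u1}
        (fun w => ENNReal.ofReal (1 - B w)) w)
        = Set.indicator {p : ℝ × Ω | A p.2 ≤ p.1} (fun p => ENNReal.ofReal (1 - B p.2)) := by
      ext p; simp [Function.uncurry, Set.indicator_apply]
    refine Measurable.lintegral_prod_right ?_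
    rw [huc]
    exact ((ENNReal.measurable_ofReal.comp (measurable_const.sub hBm)).comp
      measurable_snd).indicator (measurableSet_le (hAm.comp measurable_snd) measurable_fst)
  have hKlt : ∀ u1, K u1 < ⊤ := by
    intro u1
    have hle : K u1 ≤ 1 := by
      rw [hK]
      calc (∫⁻ w : Ω, Set.indicator {w' : Ω | A w' ≤ u1}
            (fun w => ENNReal.ofReal (1 - B w)) w)
          ≤ ∫⁻ _w : Ω, (1:ℝ≥0∞) := by
            refine lintegral_mono fun w => ?_
            by_cases h : A w ≤ u1
            · simp only [Set.indicator_apply, Set.mem_setOf_eq, h, if_true]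
              exact ENNReal.ofReal_le_one.mpr (by linarith [hB0 w])
            · simp [Set.indicator_apply, h]
        _ = 1 := by simp
    exact lt_of_le_of_lt hle (by norm_num)
  have hswap2 := key_swap' (g := A) hAm hA0
    (fun w => ENNReal.ofReal (1 - B w))
    (ENNReal.measurable_ofReal.comp (measurable_const.sub hBm))
  have hI : (∫ u1 in (0:ℝ)..1, ∫ u2 in (0:ℝ)..1, C u1 (1 - u2))
      = ∫ w : Ω, (1 - A w) * (1 - B w) := by
    have h1 : (∫ u1 in (0:ℝ)..1, ∫ u2 in (0:ℝ)..1, C u1 (1 - u2))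
        = ∫ u1 in (0:ℝ)..1, (K u1).toReal :=
      intervalIntegral.integral_congr fun u1 _ => hinner u1
    rw [h1, intervalIntegral.integral_of_le (by norm_num : (0:ℝ) ≤ 1),
      integral_toReal (hKm.aemeasurable.restrict)
        (Filter.Eventually.of_forall fun u1 => hKlt u1)]
    have h2 : (∫⁻ u1 in Set.Ioc (0:ℝ) 1, K u1)
        = ∫⁻ w : Ω, ENNReal.ofReal ((1 - A w) * (1 - B w)) := by
      rw [hK, hswap2]
      refine lintegral_congr fun w => ?_
      rw [ENNReal.ofReal_mul (by linarith [hA1 w])]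
    rw [h2, ← integral_eq_lintegral_of_nonneg_ae (f := fun w => (1 - A w) * (1 - B w))
      (Filter.Eventually.of_forall fun w => mul_nonneg (by linarith [hA1 w]) (by linarith [hB1 w]))
      ((measurable_const.sub hAm).mul (measurable_const.sub hBm) :
        Measurable fun w => (1 - A w) * (1 - B w)).aestronglyMeasurable]
  -- integrability and expectation of B
  have hBhalf : ∫ w : Ω, B w = 1 / 2 := cdf_integral_half X2 hX2 F2 hF2 hF2c
  have intB : Integrable B (ℙ : Measure Ω) := by
    refine (integrable_const (1:ℝ)).mono' hBm.aestronglyMeasurable ?_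
    exact Filter.Eventually.of_forall fun w => by
      rw [Real.norm_eq_abs, abs_le]; exact ⟨by linarith [hB0 w], hB1 w⟩
  have intAB : Integrable (fun w => A w * (1 - B w)) (ℙ : Measure Ω) := by
    refine (integrable_const (1:ℝ)).mono'
      (hAm.mul (measurable_const.sub hBm)).aestronglyMeasurable ?_
    refine Filter.Eventually.of_forall fun w => ?_
    rw [Real.norm_eq_abs, abs_le]
    constructor
    · nlinarith [hA0 w, hA1 w, hB0 w, hB1 w]
    · nlinarith [hA0 w, hA1 w, hB0 w, hB1 w]
  have int1B : Integrable (fun w => 1 - B w) (ℙ : Measure Ω) := (integrable_const (1:ℝ)).sub intB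
  have h1B : ∫ w : Ω, (1 - B w) = 1 / 2 := by
    rw [integral_sub (integrable_const (1:ℝ)) intB, hBhalf]
    simp
    norm_num
  have hsplit : ∫ w : Ω, (1 - A w) * (1 - B w)
      = (∫ w : Ω, (1 - B w)) - ∫ w : Ω, A w * (1 - B w) := by
    rw [← integral_sub int1B intAB]
    refine integral_congr_ae (Filter.Eventually.of_forall fun w => ?_)
    ring
  rw [hLHS, hI, hsplit, h1B]
  ring
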